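/- Let d ≥ 2 and let H be a d-uniform simple hypergraph such that any two distinct edges with nonempty intersection meet in exactly d − 1 vertices. Let x be a simplicial vertex of H, let S be an edge of H containing x, write N(S) = {z_1, …, z_t} with z_1, …, z_t pairwise distinct, and let S_1, …, S_t be edges of H with S_ℓ \ S = {z_ℓ} and x ∉ S_ℓ for each ℓ. Let H_2 be the induced subhypergraph of H on V(H) \ (S ∪ N(S)). If S' is a self disjoint set in H_2 consisting of m edges whose union has n vertices, then S' ∪ {S, S_1, …, S_t} is a self disjoint set in H consisting of m + t + 1 edges whose union has n + d + t vertices. -/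
import Mathlib


variable {V : Type*} [DecidableEq V] [Fintype V]

/-- The union of a family of edges. -/
def unionEdges (M : Finset (Finset V)) : Finset V := M.biUnion id

/-- `E` is the edge set of a simple hypergraph: every edge has at least two
vertices and no edge is contained in another distinct edge. -/
def IsSimpleHypergraph (E : Finset (Finset V)) : Prop :=
  (∀ S ∈ E, 2 ≤ S.card) ∧ ∀ S ∈ E, ∀ T ∈ E, S ⊆ T → S = T

/-- A family `M` of edges of `E` is a semi-induced matching if no edge of `E`
outside `M` is contained in the union of the members of `M`. -/
def IsSemiInducedMatching (E M : Finset (Finset V)) : Prop :=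
  M ⊆ E ∧ ∀ S ∈ E, S ∉ M → ¬ S ⊆ unionEdges M

/-- An induced matching is a semi-induced matching whose edges are pairwise disjoint. -/
def IsInducedMatching (E M : Finset (Finset V)) : Prop :=
  IsSemiInducedMatching E M ∧ ∀ S ∈ M, ∀ T ∈ M, S ≠ T → Disjoint S T

/-- A self semi-induced matching is a semi-induced matching in which no member
is contained in the union of the other members. -/
def IsSelfSemiInducedMatching (E M : Finset (Finset V)) : Prop :=
  IsSemiInducedMatching E M ∧ ∀ S ∈ M, ¬ S ⊆ unionEdges (M.erase S)

/-- A self-contained semi-induced matching. -/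
def IsSelfContainedSemiInducedMatching (E M : Finset (Finset V)) : Prop :=
  M ⊆ E ∧
  (∀ S ∈ E, S ∉ M → ¬ S ⊆ unionEdges M ∨ ∃ T ∈ M, T ⊆ S ∪ unionEdges (M.erase T)) ∧
  ∀ S ∈ M, ¬ S ⊆ unionEdges (M.erase S)

/-- A self disjoint set of edges. -/
def IsSelfDisjointSet (E M : Finset (Finset V)) : Prop :=
  M ⊆ E ∧ (∀ S ∈ M, ¬ S ⊆ unionEdges (M.erase S)) ∧
  ∃ M₀ ⊆ M, IsInducedMatching E M₀ ∧
    ∀ S ∈ M, S ∉ M₀ → ∃ T ∈ M₀, (S \ T).card = 1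

/-- A self semi-disjoint set of edges. -/
def IsSelfSemiDisjointSet (E M : Finset (Finset V)) : Prop :=
  M ⊆ E ∧ (∀ S ∈ M, ¬ S ⊆ unionEdges (M.erase S)) ∧
  ∃ M₀ ⊆ M, IsSemiInducedMatching E M₀ ∧
    ∀ S ∈ M, S ∉ M₀ → ∃ T ∈ M₀, (S \ T).card = 1

/-- The closed neighborhood `N[x]` of a vertex. -/
def closedNbhd (E : Finset (Finset V)) (x : V) : Finset V :=
  insert x ((E.filter fun S => x ∈ S).biUnion id)

/-- A simplicial vertex of a `d`-uniform hypergraph: every `d`-subset of `N[x]`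
is an edge. -/
def IsSimplicialVertex (E : Finset (Finset V)) (d : ℕ) (x : V) : Prop :=
  ∀ T ⊆ closedNbhd E x, T.card = d → T ∈ E

/-- `N(S)`, the union of `T \ S` over all edges `T` meeting `S`. -/
def edgeNbhd (E : Finset (Finset V)) (S : Finset V) : Finset V :=
  (E.filter fun T => (T ∩ S).Nonempty).biUnion fun T => T \ S

lemma mem_unionEdges {M : Finset (Finset V)} {v : V} :
    v ∈ unionEdges M ↔ ∃ T ∈ M, v ∈ T := by simp [unionEdges]

lemma unionEdges_insert (s : Finset V) (M : Finset (Finset V)) :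
    unionEdges (insert s M) = s ∪ unionEdges M := by
  simp [unionEdges, Finset.biUnion_insert]

lemma unionEdges_union (A B : Finset (Finset V)) :
    unionEdges (A ∪ B) = unionEdges A ∪ unionEdges B := by
  ext v; simp [unionEdges, or_and_right, exists_or]

/-- in a `d`-uniform simple hypergraph in which any two distinct
meeting edges intersect in exactly `d - 1` vertices, let `x` be a simplicial
vertex, `S` an edge containing `x`, and for each `z ∈ N(S)` let `SE z` be an
edge with `SE z \ S = {z}` and `x ∉ SE z`.  Let `H₂` be the induced
subhypergraph on `V(H) \ (S ∪ N(S))`.  If `M'` is a self disjoint set in `H₂`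
of `m` edges whose union has `n` vertices, then `M' ∪ {S} ∪ {SE z : z ∈ N(S)}`
is a self disjoint set in `H` of `m + t + 1` edges whose union has `n + d + t`
vertices, where `t = |N(S)|`. -/
theorem selfDisjointSet_extend
    (E : Finset (Finset V)) (d : ℕ) (hd : 2 ≤ d)
    (hH : IsSimpleHypergraph E) (hUnif : ∀ S ∈ E, S.card = d)
    (hInt : ∀ S ∈ E, ∀ T ∈ E, S ≠ T → (S ∩ T).Nonempty → (S ∩ T).card = d - 1)
    (x : V) (hx : IsSimplicialVertex E d x)
    (S : Finset V) (hS : S ∈ E) (hxS : x ∈ S)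
    (SE : V → Finset V)
    (hSE : ∀ z ∈ edgeNbhd E S, SE z ∈ E ∧ SE z \ S = {z} ∧ x ∉ SE z)
    (M' : Finset (Finset V)) (m n : ℕ)
    (hM' : IsSelfDisjointSet
      (E.filter fun T => T ⊆ Finset.univ \ (S ∪ edgeNbhd E S)) M')
    (hm : M'.card = m) (hn : (unionEdges M').card = n) :
    IsSelfDisjointSet E (M' ∪ insert S ((edgeNbhd E S).image SE)) ∧
    (M' ∪ insert S ((edgeNbhd E S).image SE)).card = m + (edgeNbhd E S).card + 1 ∧
    (unionEdges (M' ∪ insert S ((edgeNbhd E S).image SE))).card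
      = n + d + (edgeNbhd E S).card := by
  classical
  set N := edgeNbhd E S with hN
  obtain ⟨hM'sub, hM'b, M₀', hM₀'sub, hIM', hone'⟩ := hM'
  have hM'E : ∀ T ∈ M', T ∈ E := fun T hT => (Finset.mem_filter.mp (hM'sub hT)).1
  have hcomp : ∀ T ∈ M', ∀ v ∈ T, v ∉ S ∧ v ∉ N := by
    intro T hT v hv
    have h := Finset.mem_sdiff.mp ((Finset.mem_filter.mp (hM'sub hT)).2 hv)
    have := h.2
    rw [Finset.mem_union] at this
    exact ⟨fun hc => this (Or.inl hc), fun hc => this (Or.inr hc)⟩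
  have hSEE : ∀ z ∈ N, SE z ∈ E := fun z hz => (hSE z hz).1
  have hzSE : ∀ z ∈ N, z ∈ SE z := by
    intro z hz
    have h : z ∈ SE z \ S := by rw [(hSE z hz).2.1]; simp
    exact (Finset.mem_sdiff.mp h).1
  have hSEsub : ∀ z ∈ N, SE z ⊆ insert z S := by
    intro z hz v hv
    by_cases hvS : v ∈ S
    · exact Finset.mem_insert_of_mem hvS
    · have h : v ∈ SE z \ S := Finset.mem_sdiff.mpr ⟨hv, hvS⟩
      rw [(hSE z hz).2.1, Finset.mem_singleton] at h
      simp [h]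
  have hzNS : ∀ z ∈ N, z ∉ S := by
    intro z hz
    rw [hN, edgeNbhd] at hz
    simp only [Finset.mem_biUnion, Finset.mem_filter, Finset.mem_sdiff] at hz
    obtain ⟨T, _, _, h⟩ := hz
    exact h
  have hSEne : ∀ z ∈ N, SE z ≠ S := by
    intro z hz hc
    have := (hSE z hz).2.1
    rw [hc, Finset.sdiff_self] at this
    exact (Finset.singleton_ne_empty z) this.symm
  have hSEinj : Set.InjOn SE ↑N := by
    intro z1 h1 z2 h2 heq
    have e1 := (hSE z1 h1).2.1
    have e2 := (hSE z2 h2).2.1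
    rw [heq, e2] at e1
    exact (Finset.singleton_injective e1).symm
  set A : Finset (Finset V) := insert S (N.image SE) with hA
  -- membership in A
  have hmemA : ∀ T ∈ A, T = S ∨ ∃ z ∈ N, SE z = T := by
    intro T hT
    rcases Finset.mem_insert.mp hT with h | h
    · exact Or.inl h
    · exact Or.inr (Finset.mem_image.mp h)
  have hAsubSN : ∀ T ∈ A, T ⊆ S ∪ N := by
    intro T hT v hv
    rcases hmemA T hT with rfl | ⟨z, hz, rfl⟩
    · exact Finset.mem_union_left _ hv
    · rcases Finset.mem_insert.mp (hSEsub z hz hv) with rfl | h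
      · exact Finset.mem_union_right _ hz
      · exact Finset.mem_union_left _ h
  have hunionA : unionEdges A = S ∪ N := by
    apply Finset.Subset.antisymm
    · intro v hv
      obtain ⟨T, hT, hvT⟩ := mem_unionEdges.mp hv
      exact hAsubSN T hT hvT
    · intro v hv
      rcases Finset.mem_union.mp hv with h | h
      · exact mem_unionEdges.mpr ⟨S, Finset.mem_insert_self _ _, h⟩
      · exact mem_unionEdges.mpr ⟨SE v, Finset.mem_insert_of_mem
          (Finset.mem_image_of_mem _ h), hzSE v h⟩
  have hdisjMA : Disjoint M' A := by
    rw [Finset.disjoint_left]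
    intro T hTM' hTA
    rcases hmemA T hTA with rfl | ⟨z, hz, rfl⟩
    · exact (hcomp T hTM' x hxS).1 hxS
    · exact (hcomp _ hTM' z (hzSE z hz)).2 hz
  refine ⟨⟨?_, ?_, ?_⟩, ?_, ?_⟩
  · -- M ⊆ E
    intro T hT
    rcases Finset.mem_union.mp hT with h | h
    · exact hM'E T h
    · rcases hmemA T h with rfl | ⟨z, hz, rfl⟩
      · exact hS
      · exact hSEE z hz
  · -- erase condition
    intro T hT hsub
    rcases Finset.mem_union.mp hT with hTM' | hTA
    · apply hM'b T hTM'
      intro v hv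
      obtain ⟨T₁, hT₁, hvT₁⟩ := mem_unionEdges.mp (hsub hv)
      have hT₁ne : T₁ ≠ T := Finset.ne_of_mem_erase hT₁
      rcases Finset.mem_union.mp (Finset.mem_of_mem_erase hT₁) with h1 | h1
      · exact mem_unionEdges.mpr ⟨T₁, Finset.mem_erase.mpr ⟨hT₁ne, h1⟩, hvT₁⟩
      · exact absurd (hAsubSN T₁ h1 hvT₁) (by
          have h := hcomp T hTM' v hv
          rw [Finset.mem_union]
          tauto)
    · rcases hmemA T hTA with h | ⟨z, hz, rfl⟩
      · -- T = S, use x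
        rw [h] at hsub
        obtain ⟨T₁, hT₁, hxT₁⟩ := mem_unionEdges.mp (hsub hxS)
        have hT₁ne : T₁ ≠ S := Finset.ne_of_mem_erase hT₁
        rcases Finset.mem_union.mp (Finset.mem_of_mem_erase hT₁) with h1 | h1
        · exact (hcomp T₁ h1 x hxT₁).1 hxS
        · rcases hmemA T₁ h1 with rfl | ⟨z, hz, rfl⟩
          · exact hT₁ne rfl
          · exact (hSE z hz).2.2 hxT₁
      · -- T = SE z, use z
        obtain ⟨T₁, hT₁, hzT₁⟩ := mem_unionEdges.mp (hsub (hzSE z hz))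
        have hT₁ne : T₁ ≠ SE z := Finset.ne_of_mem_erase hT₁
        rcases Finset.mem_union.mp (Finset.mem_of_mem_erase hT₁) with h1 | h1
        · exact (hcomp T₁ h1 z hzT₁).2 hz
        · rcases hmemA T₁ h1 with rfl | ⟨z', hz', rfl⟩
          · exact hzNS z hz hzT₁
          · rcases Finset.mem_insert.mp (hSEsub z' hz' hzT₁) with rfl | h
            · exact hT₁ne rfl
            · exact hzNS z hz h
  · -- induced matching part
    refine ⟨insert S M₀', ?_, ⟨⟨?_, ?_⟩, ?_⟩, ?_⟩
    · -- insert S M₀' ⊆ M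
      intro T hT
      rcases Finset.mem_insert.mp hT with rfl | h
      · exact Finset.mem_union_right _ (Finset.mem_insert_self _ _)
      · exact Finset.mem_union_left _ (hM₀'sub h)
    · -- insert S M₀' ⊆ E
      intro T hT
      rcases Finset.mem_insert.mp hT with rfl | h
      · exact hS
      · exact hM'E T (hM₀'sub h)
    · -- semi-induced in E
      intro T hTE hTnot hsub
      rw [unionEdges_insert] at hsub
      have hU : ∀ v ∈ unionEdges M₀', v ∉ S ∧ v ∉ N := by
        intro v hv
        obtain ⟨T₁, hT₁, hvT₁⟩ := mem_unionEdges.mp hv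
        exact hcomp T₁ (hM₀'sub hT₁) v hvT₁
      by_cases hTS : T ⊆ S
      · exact hTnot (by rw [hH.2 T hTE S hS hTS]; exact Finset.mem_insert_self _ _)
      · obtain ⟨w, hwT, hwS⟩ := Finset.not_subset.mp hTS
        by_cases hmeet : (T ∩ S).Nonempty
        · have hwN : w ∈ N := by
            rw [hN, edgeNbhd]
            simp only [Finset.mem_biUnion, Finset.mem_filter, Finset.mem_sdiff]
            exact ⟨T, ⟨hTE, hmeet⟩, hwT, hwS⟩
          rcases Finset.mem_union.mp (hsub hwT) with h | h
          · exact hwS h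
          · exact (hU w h).2 hwN
        · have hTU : T ⊆ unionEdges M₀' := by
            intro v hv
            rcases Finset.mem_union.mp (hsub hv) with h | h
            · exact absurd ⟨v, Finset.mem_inter.mpr ⟨hv, h⟩⟩ hmeet
            · exact h
          have hTfilter : T ∈ E.filter fun T => T ⊆ Finset.univ \ (S ∪ N) := by
            rw [Finset.mem_filter]
            refine ⟨hTE, fun v hv => ?_⟩
            have h := hU v (hTU hv)
            rw [Finset.mem_sdiff, Finset.mem_union]
            exact ⟨Finset.mem_univ v, by tauto⟩
          exact hIM'.1.2 T hTfilter (fun h => hTnot (Finset.mem_insert_of_mem h)) hTU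
    · -- pairwise disjoint
      intro T1 h1 T2 h2 hne
      rcases Finset.mem_insert.mp h1 with rfl | h1' <;>
        rcases Finset.mem_insert.mp h2 with rfl | h2'
      · exact absurd rfl hne
      · rw [Finset.disjoint_right]
        intro v hv
        exact (hcomp T2 (hM₀'sub h2') v hv).1
      · rw [Finset.disjoint_left]
        intro v hv
        exact (hcomp T1 (hM₀'sub h1') v hv).1
      · exact hIM'.2 T1 h1' T2 h2' hne
    · -- edges not in M₀
      intro T hTM hTnot
      rcases Finset.mem_union.mp hTM with h | h
      · obtain ⟨T₀, hT₀, hc⟩ := hone' T h (fun hc => hTnot (Finset.mem_insert_of_mem hc))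
        exact ⟨T₀, Finset.mem_insert_of_mem hT₀, hc⟩
      · rcases hmemA T h with rfl | ⟨z, hz, rfl⟩
        · exact absurd (Finset.mem_insert_self _ _) hTnot
        · exact ⟨S, Finset.mem_insert_self _ _, by rw [(hSE z hz).2.1]; simp⟩
  · -- cardinality of the family
    rw [Finset.card_union_of_disjoint hdisjMA, hm, hA,
      Finset.card_insert_of_notMem (by
        intro hc
        obtain ⟨z, hz, hzc⟩ := Finset.mem_image.mp hc
        exact hSEne z hz hzc),
      Finset.card_image_of_injOn hSEinj]
    omega
  · -- cardinality of the union
    rw [unionEdges_union, hunionA, Finset.card_union_of_disjoint, hn,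
      Finset.card_union_of_disjoint, hUnif S hS]
    · omega
    · rw [Finset.disjoint_right]
      exact hzNS
    · rw [Finset.disjoint_left]
      intro v hv
      obtain ⟨T, hT, hvT⟩ := mem_unionEdges.mp hv
      have h := hcomp T hT v hvT
      rw [Finset.mem_union]
      tauto
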